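/- Let a′ : ℕ → ℝ and b : ℕ → ℝ be sequences of positive numbers with ∑_{i=0}^∞ a′(i)/b(i)² < ∞, let c : ℕ → ℝ and κ > 0 satisfy κ ≤ ∏_{j=M}^{N} c(j) ≤ 1/κ for all natural numbers M ≤ N, and assume that for every i the infinite product P(i) := lim_{N→∞} ∏_{j=i}^{N} c(j) exists. Let g : ℕ → ℂ satisfy ∑_{i=0}^∞ |g(i)|²/a′(i) < ∞, and suppose f : ℕ → ℂ satisfies b(0)f(0) = g(0) and b(k)(f(k) − c(k−1)f(k−1)) = g(k) for all k ≥ 1. Then the series ∑_{i=0}^∞ (1/b(i))·P(i)·g(i) converges absolutely and lim_{k→∞} f(k) exists and equals ∑_{i=0}^∞ (1/b(i))·P(i)·g(i). -/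

import Mathlib

open Finset Filter

set_option maxHeartbeats 1000000

/-- any `f` in the domain of the Jacobi type operator `A` (with
`Af = g` square-summable against `1/a′`) has a limit at infinity, given by the
absolutely convergent series `∑ᵢ (1/b(i))·P(i)·g(i)` where
`P(i) = ∏_{j=i}^∞ c(j)`. -/
theorem jacobi_A_limit_at_infinity (a' b c : ℕ → ℝ) (κ : ℝ) (P : ℕ → ℝ)
    (g f : ℕ → ℂ)
    (ha' : ∀ i, 0 < a' i) (hb : ∀ i, 0 < b i)
    (ht : Summable fun i => a' i / (b i)^2)
    (hκ : 0 < κ)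
    (hc : ∀ M N : ℕ, M ≤ N →
      κ ≤ ∏ j ∈ Finset.Icc M N, c j ∧ ∏ j ∈ Finset.Icc M N, c j ≤ 1 / κ)
    (hP : ∀ i, Tendsto (fun N => ∏ j ∈ Finset.Icc i N, c j) atTop (nhds (P i)))
    (hg : Summable fun i => ‖g i‖^2 / a' i)
    (hf0 : (b 0 : ℂ) * f 0 = g 0)
    (hfk : ∀ k, 1 ≤ k → (b k : ℂ) * (f k - (c (k-1) : ℂ) * f (k-1)) = g k) :
    Summable (fun i => ‖(1 / (b i : ℂ)) * (P i : ℂ) * g i‖) ∧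
    Tendsto f atTop (nhds (∑' i, (1 / (b i : ℂ)) * (P i : ℂ) * g i)) := by
  have hbne : ∀ i, (b i : ℂ) ≠ 0 := fun i => by
    exact_mod_cast (hb i).ne'
  -- bounds on P
  have hPge : ∀ i, κ ≤ P i := fun i =>
    ge_of_tendsto (hP i) (eventually_atTop.2 ⟨i, fun N hN => (hc i N hN).1⟩)
  have hPle : ∀ i, P i ≤ 1 / κ := fun i =>
    le_of_tendsto (hP i) (eventually_atTop.2 ⟨i, fun N hN => (hc i N hN).2⟩)
  have hPpos : ∀ i, 0 < P i := fun i => lt_of_lt_of_le hκ (hPge i)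
  have hPne : ∀ i, (P i : ℂ) ≠ 0 := fun i => by exact_mod_cast (hPpos i).ne'
  -- summability
  have hsum : Summable (fun i => ‖(1 / (b i : ℂ)) * (P i : ℂ) * g i‖) := by
    apply Summable.of_nonneg_of_le (fun i => norm_nonneg _)
      (f := fun i => (1/κ) * ((‖g i‖^2 / a' i + a' i / (b i)^2) / 2))
    · intro i
      have hbi := hb i
      have hai := ha' i
      have h1 : ‖(1 / (b i : ℂ)) * (P i : ℂ) * g i‖ = (1 / b i) * P i * ‖g i‖ := by
        simp only [norm_mul, norm_div, norm_one, Complex.norm_real, Real.norm_eq_abs,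
          abs_of_pos hbi, abs_of_pos (hPpos i)]
      have h2 : (1 / b i) * P i * ‖g i‖ ≤ (1/κ) * (‖g i‖ / b i) := by
        calc (1 / b i) * P i * ‖g i‖ ≤ (1 / b i) * (1/κ) * ‖g i‖ := by
              gcongr
              exact hPle i
          _ = (1/κ) * (‖g i‖ / b i) := by ring
      have h3 : ‖g i‖ / b i ≤ (‖g i‖^2 / a' i + a' i / (b i)^2) / 2 := by
        rw [div_add_div _ _ hai.ne' (by positivity : ((b i)^2 : ℝ) ≠ 0), div_div,
          div_le_div_iff₀ hbi (by positivity)]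
        nlinarith [mul_nonneg hbi.le (sq_nonneg (‖g i‖ * b i - a' i))]
      rw [h1]
      exact h2.trans (mul_le_mul_of_nonneg_left h3 (by positivity))
    · exact ((hg.add ht).div_const 2).mul_left _
  refine ⟨hsum, ?_⟩
  set s : ℕ → ℂ := fun i => (1 / (b i : ℂ)) * (P i : ℂ) * g i with hs_def
  have hs : Summable s := Summable.of_norm hsum
  -- product identity: P i = (∏ j in Ico i k, c j) * P k
  have hprod : ∀ i k : ℕ, i ≤ k → P i = (∏ j ∈ Finset.Ico i k, c j) * P k := by
    intro i k hik
    have h1 : Tendsto (fun N => (∏ j ∈ Finset.Ico i k, c j) * ∏ j ∈ Finset.Icc k N, c j)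
        atTop (nhds ((∏ j ∈ Finset.Ico i k, c j) * P k)) := (hP k).const_mul _
    have h2 : (fun N => ∏ j ∈ Finset.Icc i N, c j) =ᶠ[atTop]
        (fun N => (∏ j ∈ Finset.Ico i k, c j) * ∏ j ∈ Finset.Icc k N, c j) := by
      filter_upwards [eventually_ge_atTop k] with N hN
      rw [← Finset.Ico_add_one_right_eq_Icc i N, ← Finset.Ico_add_one_right_eq_Icc k N,
        ← Finset.prod_Ico_consecutive _ hik (by omega)]
    exact tendsto_nhds_unique (hP i) (h1.congr' h2.symm)
  -- closed form for f
  have F : ∀ k, f k = ∑ i ∈ Finset.range (k+1),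
      (∏ j ∈ Finset.Ico i k, (c j : ℂ)) * (g i / b i) := by
    intro k
    induction k with
    | zero =>
      simp only [zero_add, Finset.range_one, Finset.sum_singleton, Finset.Ico_self,
        Finset.prod_empty, one_mul]
      rw [eq_div_iff (hbne 0), mul_comm]
      exact hf0
    | succ k ih =>
      have hk := hfk (k+1) (by omega)
      simp only [Nat.add_sub_cancel] at hk
      have hfk1 : f (k+1) = (c k : ℂ) * f k + g (k+1) / b (k+1) := by
        rw [mul_comm] at hk
        rw [← eq_div_iff (hbne (k+1))] at hk
        linear_combination hk
      have hRHS : ∑ i ∈ Finset.range (k+2), (∏ j ∈ Finset.Ico i (k+1), (c j : ℂ)) * (g i / b i)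
          = (∑ i ∈ Finset.range (k+1), (c k : ℂ) * ((∏ j ∈ Finset.Ico i k, (c j : ℂ)) * (g i / b i)))
            + g (k+1) / b (k+1) := by
        rw [Finset.sum_range_succ, Finset.Ico_self, Finset.prod_empty, one_mul]
        congr 1
        apply Finset.sum_congr rfl
        intro i hi
        rw [Finset.prod_Ico_succ_top (by simpa [Nat.lt_succ_iff] using hi)]
        ring
      rw [hfk1, ih, hRHS, Finset.mul_sum]
  -- rewrite closed form using P
  have F2 : ∀ k, f k = ((P k : ℂ))⁻¹ * ∑ i ∈ Finset.range (k+1), s i := by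
    intro k
    rw [F k, Finset.mul_sum]
    apply Finset.sum_congr rfl
    intro i hi
    have hik : i ≤ k := by simpa [Nat.lt_succ_iff] using hi
    have : (∏ j ∈ Finset.Ico i k, (c j : ℂ)) = ((P i : ℂ)) / (P k : ℂ) := by
      rw [eq_div_iff (hPne k)]
      have := hprod i k hik
      push_cast [this]
      ring
    rw [this, hs_def]
    field_simp
  -- P k tends to 1
  have hP1 : Tendsto P atTop (nhds 1) := by
    have hQ : Tendsto (fun k => ∏ j ∈ Finset.Icc 0 k, c j) atTop (nhds (P 0)) := hP 0
    have hP0ne : P 0 ≠ 0 := (hPpos 0).ne'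
    have h1 : Tendsto (fun k => P 0 / ∏ j ∈ Finset.Icc 0 k, c j) atTop (nhds 1) := by
      have := (tendsto_const_nhds (x := P 0) (f := atTop (α := ℕ))).div hQ hP0ne
      rw [div_self hP0ne] at this
      exact this
    have h2 : (fun k => P 0 / ∏ j ∈ Finset.Icc 0 k, c j) = (fun k => P (k+1)) := by
      funext k
      have hpk := hprod 0 (k+1) (by omega)
      have hQpos : 0 < ∏ j ∈ Finset.Icc 0 k, c j := lt_of_lt_of_le hκ (hc 0 k (by omega)).1
      rw [show Finset.Ico 0 (k+1) = Finset.Icc 0 k from by rw [Finset.Ico_add_one_right_eq_Icc]] at hpk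
      rw [hpk, mul_comm, mul_div_assoc, div_self hQpos.ne', mul_one]
    rw [h2] at h1
    exact (tendsto_add_atTop_iff_nat 1).mp h1
  -- conclude
  have hP1C : Tendsto (fun k => ((P k : ℂ))⁻¹) atTop (nhds 1) := by
    have : Tendsto (fun k => (P k : ℂ)) atTop (nhds (1 : ℂ)) := by
      have := hP1
      exact_mod_cast (Complex.continuous_ofReal.continuousAt.tendsto.comp hP1)
    simpa using this.inv₀ one_ne_zero
  have hS : Tendsto (fun k => ∑ i ∈ Finset.range (k+1), s i) atTop (nhds (∑' i, s i)) :=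
    (hs.hasSum.tendsto_sum_nat).comp (tendsto_add_atTop_nat 1)
  have := hP1C.mul hS
  rw [one_mul] at this
  exact Tendsto.congr (fun k => (F2 k).symm) this
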